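/- Let P_X and Q_X be two probability distributions on a finite product 𝒳^q such that the induced marginals satisfy P_{X_i} = Q_{X_i} for all i = 1,…,q, Q_X = Π_{i=1}^q Q_{X_i} is a product distribution, and P_X is absolutely continuous with respect to Q_X. Let A be any streaming algorithm on 𝒳^q, and for i ∈ [q] let Σ_i = Σ_i(X_1,…,X_i) denote the state produced at step i (with Σ_0 constant). Then D_KL(P_A‖Q_A) ≤ Σ_{i=1}^{q} D_KL(P_{X_i|Σ_{i−1}} ‖ P_{X_i} | P_{Σ_{i−1}}) = Σ_{i=1}^{q} I(X_i; Σ_{i−1}), where the mutual information is computed with respect to the joint distribution of (X_i, Σ_{i−1}) induced by P_X. -/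

import Mathlib

open scoped Classical

/-- The sequence of internal states of a streaming algorithm `A` on alphabet `𝒳`
processing the input `x = (x_1, …, x_q) ∈ 𝒳^q`: the state `σ_0` is the empty
string, and `σ_i = A(i, σ_{i-1}, x_i)` for `i = 1, …, q`.  (With `0`-based
indexing of the input, the state after `k` processed symbols is `streamRun A x k`,
and the symbol consumed at step `k+1` is `x k`.) -/
def streamRun {𝒳 : Type*} {q : ℕ} (A : ℕ → List Bool → 𝒳 → List Bool)
    (x : Fin q → 𝒳) : ℕ → List Bool
  | 0 => []
  | (i + 1) =>
      if h : i < q then A (i + 1) (streamRun A x i) (x ⟨i, h⟩) else streamRun A x i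

/-- The distribution of the output `A(X) = σ_q` of the streaming algorithm `A`
when the input `X ∈ 𝒳^q` is distributed according to `μ`. -/
noncomputable def outDist {𝒳 : Type*} [Fintype 𝒳] {q : ℕ}
    (A : ℕ → List Bool → 𝒳 → List Bool) (μ : (Fin q → 𝒳) → ℝ) : List Bool → ℝ :=
  fun σ => ∑ x : Fin q → 𝒳, if streamRun A x q = σ then μ x else 0

/-- Kullback–Leibler divergence (natural logarithm). -/
noncomputable def klDiv {α : Type*} (p q : α → ℝ) : ℝ :=
  ∑' a, p a * Real.log (p a / q a)

/-- The marginal distribution `P_{X_i}` of the `i`-th coordinate under `P`. -/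
noncomputable def margX {𝒳 : Type*} [Fintype 𝒳] {q : ℕ}
    (P : (Fin q → 𝒳) → ℝ) (i : Fin q) (a : 𝒳) : ℝ :=
  ∑ x : Fin q → 𝒳, if x i = a then P x else 0

/-- The distribution `P_{Σ_{i-1}}` of the state `Σ_{i-1}` just before the
`i`-th symbol `X_i` is consumed (under `P`). -/
noncomputable def margS {𝒳 : Type*} [Fintype 𝒳] {q : ℕ}
    (A : ℕ → List Bool → 𝒳 → List Bool) (P : (Fin q → 𝒳) → ℝ) (i : Fin q)
    (σ : List Bool) : ℝ :=
  ∑ x : Fin q → 𝒳, if streamRun A x i.1 = σ then P x else 0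

/-- The joint distribution `P_{X_i Σ_{i-1}}` of `(X_i, Σ_{i-1})` induced by `P`. -/
noncomputable def jointXS {𝒳 : Type*} [Fintype 𝒳] {q : ℕ}
    (A : ℕ → List Bool → 𝒳 → List Bool) (P : (Fin q → 𝒳) → ℝ) (i : Fin q)
    (a : 𝒳) (σ : List Bool) : ℝ :=
  ∑ x : Fin q → 𝒳, if x i = a ∧ streamRun A x i.1 = σ then P x else 0

/-- The conditional divergence `D_KL(P_{X_i | Σ_{i-1}} ‖ P_{X_i} | P_{Σ_{i-1}})
= Σ_σ P_{Σ_{i-1}}(σ) · D_KL(P_{X_i | Σ_{i-1} = σ} ‖ P_{X_i})`. -/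
noncomputable def condDiv {𝒳 : Type*} [Fintype 𝒳] {q : ℕ}
    (A : ℕ → List Bool → 𝒳 → List Bool) (P : (Fin q → 𝒳) → ℝ) (i : Fin q) : ℝ :=
  ∑' σ : List Bool, margS A P i σ *
    ∑ a : 𝒳, (jointXS A P i a σ / margS A P i σ) *
      Real.log ((jointXS A P i a σ / margS A P i σ) / margX P i a)

/-- The mutual information `I(X_i; Σ_{i-1})` computed with respect to the joint
distribution `P_{X_i Σ_{i-1}}` induced by `P` (natural logarithm). -/
noncomputable def miXS {𝒳 : Type*} [Fintype 𝒳] {q : ℕ}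
    (A : ℕ → List Bool → 𝒳 → List Bool) (P : (Fin q → 𝒳) → ℝ) (i : Fin q) : ℝ :=
  ∑' σ : List Bool, ∑ a : 𝒳, jointXS A P i a σ *
    Real.log (jointXS A P i a σ / (margX P i a * margS A P i σ))

section Aux

open Finset

variable {𝒳 : Type*} [Fintype 𝒳] {q : ℕ}

/-- States reachable after `k` steps. -/
noncomputable def stSupp (A : ℕ → List Bool → 𝒳 → List Bool) (q k : ℕ) :
    Finset (List Bool) :=
  Finset.image (fun x : Fin q → 𝒳 => streamRun A x k) Finset.univ

lemma streamRun_mem (A : ℕ → List Bool → 𝒳 → List Bool) (x : Fin q → 𝒳) (k : ℕ) :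
    streamRun A x k ∈ stSupp A q k :=
  Finset.mem_image_of_mem _ (Finset.mem_univ x)

lemma streamRun_eq_of (A : ℕ → List Bool → 𝒳 → List Bool) (k : ℕ) (x y : Fin q → 𝒳)
    (h : ∀ j : Fin q, (j : ℕ) < k → x j = y j) :
    streamRun A x k = streamRun A y k := by
  induction k with
  | zero => rfl
  | succ n ih =>
    have hih : streamRun A x n = streamRun A y n :=
      ih (fun j hj => h j (Nat.lt_succ_of_lt hj))
    simp only [streamRun]
    split
    · next hn => rw [hih, h ⟨n, hn⟩ (Nat.lt_succ_self n)]
    · exact hih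

lemma margS_eq_zero {A : ℕ → List Bool → 𝒳 → List Bool} {i : Fin q} {σ : List Bool}
    (h : σ ∉ stSupp A q i.1) (P : (Fin q → 𝒳) → ℝ) : margS A P i σ = 0 := by
  apply Finset.sum_eq_zero
  intro x _
  rw [if_neg]
  intro hx
  exact h (hx ▸ streamRun_mem A x i.1)

lemma jointXS_eq_zero {A : ℕ → List Bool → 𝒳 → List Bool} {i : Fin q} {σ : List Bool}
    (h : σ ∉ stSupp A q i.1) (P : (Fin q → 𝒳) → ℝ) (a : 𝒳) : jointXS A P i a σ = 0 := by
  apply Finset.sum_eq_zero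
  intro x _
  rw [if_neg]
  rintro ⟨-, hx⟩
  exact h (hx ▸ streamRun_mem A x i.1)

lemma margS_nonneg {A : ℕ → List Bool → 𝒳 → List Bool} {P : (Fin q → 𝒳) → ℝ}
    (hP : ∀ x, 0 ≤ P x) (i : Fin q) (σ : List Bool) : 0 ≤ margS A P i σ :=
  Finset.sum_nonneg fun x _ => by by_cases h : streamRun A x i.1 = σ <;> simp [h, hP x]

lemma jointXS_nonneg {A : ℕ → List Bool → 𝒳 → List Bool} {P : (Fin q → 𝒳) → ℝ}
    (hP : ∀ x, 0 ≤ P x) (i : Fin q) (a : 𝒳) (σ : List Bool) : 0 ≤ jointXS A P i a σ :=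
  Finset.sum_nonneg fun x _ => by
    by_cases h : x i = a ∧ streamRun A x i.1 = σ <;> simp [h, hP x]

lemma jointXS_le_margS {A : ℕ → List Bool → 𝒳 → List Bool} {P : (Fin q → 𝒳) → ℝ}
    (hP : ∀ x, 0 ≤ P x) (i : Fin q) (a : 𝒳) (σ : List Bool) :
    jointXS A P i a σ ≤ margS A P i σ := by
  apply Finset.sum_le_sum
  intro x _
  by_cases h : x i = a ∧ streamRun A x i.1 = σ
  · rw [if_pos h, if_pos h.2]
  · rw [if_neg h]
    by_cases h2 : streamRun A x i.1 = σ <;> simp [h2, hP x]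

lemma jointXS_le_margX {A : ℕ → List Bool → 𝒳 → List Bool} {P : (Fin q → 𝒳) → ℝ}
    (hP : ∀ x, 0 ≤ P x) (i : Fin q) (a : 𝒳) (σ : List Bool) :
    jointXS A P i a σ ≤ margX P i a := by
  apply Finset.sum_le_sum
  intro x _
  by_cases h : x i = a ∧ streamRun A x i.1 = σ
  · rw [if_pos h, if_pos h.1]
  · rw [if_neg h]
    by_cases h2 : x i = a <;> simp [h2, hP x]

lemma sum_jointXS {A : ℕ → List Bool → 𝒳 → List Bool} (P : (Fin q → 𝒳) → ℝ)
    (i : Fin q) (σ : List Bool) : ∑ a : 𝒳, jointXS A P i a σ = margS A P i σ := by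
  unfold jointXS margS
  rw [Finset.sum_comm]
  refine Finset.sum_congr rfl fun x _ => ?_
  by_cases h : streamRun A x i.1 = σ
  · simp only [h, and_true]
    rw [Finset.sum_ite_eq Finset.univ (x i) (fun _ => P x)]
    simp
  · simp [h]

lemma sum_margX {P : (Fin q → 𝒳) → ℝ} (i : Fin q) :
    ∑ a : 𝒳, margX P i a = ∑ x, P x := by
  unfold margX
  rw [Finset.sum_comm]
  refine Finset.sum_congr rfl fun x _ => ?_
  rw [Finset.sum_ite_eq Finset.univ (x i) (fun _ => P x)]
  simp

lemma margS_ac {A : ℕ → List Bool → 𝒳 → List Bool} {P Q : (Fin q → 𝒳) → ℝ}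
    (hQnn : ∀ x, 0 ≤ Q x) (hac : ∀ x, Q x = 0 → P x = 0) (i : Fin q) (σ : List Bool)
    (h : margS A Q i σ = 0) : margS A P i σ = 0 := by
  apply Finset.sum_eq_zero
  intro x _
  by_cases hx : streamRun A x i.1 = σ
  · rw [if_pos hx]
    apply hac
    have := (Finset.sum_eq_zero_iff_of_nonneg
      (fun y _ => by by_cases hy : streamRun A y i.1 = σ <;> simp [hy, hQnn y])).mp h x
        (Finset.mem_univ x)
    rwa [if_pos hx] at this
  · rw [if_neg hx]

lemma jointXS_ac {A : ℕ → List Bool → 𝒳 → List Bool} {P Q : (Fin q → 𝒳) → ℝ}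
    (hQnn : ∀ x, 0 ≤ Q x) (hac : ∀ x, Q x = 0 → P x = 0) (i : Fin q) (a : 𝒳)
    (σ : List Bool) (h : jointXS A Q i a σ = 0) : jointXS A P i a σ = 0 := by
  apply Finset.sum_eq_zero
  intro x _
  by_cases hx : x i = a ∧ streamRun A x i.1 = σ
  · rw [if_pos hx]
    apply hac
    have := (Finset.sum_eq_zero_iff_of_nonneg
      (fun y _ => by by_cases hy : y i = a ∧ streamRun A y i.1 = σ <;> simp [hy, hQnn y])).mp
        h x (Finset.mem_univ x)
    rwa [if_pos hx] at this
  · rw [if_neg hx]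

lemma klDiv_self {α : Type*} (f : α → ℝ) : klDiv f f = 0 := by
  unfold klDiv
  have : ∀ a, f a * Real.log (f a / f a) = 0 := by
    intro a
    rcases eq_or_ne (f a) 0 with h | h
    · rw [h, zero_mul]
    · rw [div_self h, Real.log_one, mul_zero]
  simp only [this, tsum_zero]

lemma one_sub_inv_le_log {x : ℝ} (hx : 0 < x) : 1 - x⁻¹ ≤ Real.log x := by
  have h := Real.log_le_sub_one_of_pos (inv_pos.mpr hx)
  rw [Real.log_inv] at h
  linarith

lemma logSum {α : Type*} (s : Finset α) (p r : α → ℝ)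
    (hp : ∀ a ∈ s, 0 ≤ p a) (hr : ∀ a ∈ s, 0 ≤ r a)
    (hac : ∀ a ∈ s, r a = 0 → p a = 0) :
    (∑ a ∈ s, p a) * Real.log ((∑ a ∈ s, p a) / (∑ a ∈ s, r a)) ≤
      ∑ a ∈ s, p a * Real.log (p a / r a) := by
  rcases eq_or_lt_of_le (Finset.sum_nonneg hp) with h0 | hPpos
  · have hz : ∀ a ∈ s, p a = 0 := (Finset.sum_eq_zero_iff_of_nonneg hp).mp h0.symm
    rw [← h0, zero_mul]
    apply Finset.sum_nonneg
    intro a ha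
    rw [hz a ha, zero_mul]
  · have hQpos : 0 < ∑ a ∈ s, r a := by
      rcases eq_or_lt_of_le (Finset.sum_nonneg hr) with h0 | h
      · exfalso
        have hz : ∀ a ∈ s, r a = 0 := (Finset.sum_eq_zero_iff_of_nonneg hr).mp h0.symm
        have : ∑ a ∈ s, p a = 0 := Finset.sum_eq_zero fun a ha => hac a ha (hz a ha)
        rw [this] at hPpos
        exact lt_irrefl _ hPpos
      · exact h
    set Ps := ∑ a ∈ s, p a with hPs
    set Qs := ∑ a ∈ s, r a with hQs
    have key : ∀ a ∈ s, p a - r a * (Ps / Qs) ≤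
        p a * Real.log (p a / r a) - p a * Real.log (Ps / Qs) := by
      intro a ha
      rcases eq_or_lt_of_le (hp a ha) with hpa | hpa
      · rw [← hpa]
        have : 0 ≤ r a * (Ps / Qs) := mul_nonneg (hr a ha) (le_of_lt (div_pos hPpos hQpos))
        simp only [zero_mul, zero_sub, sub_zero]
        linarith
      · have hra : 0 < r a := by
          rcases eq_or_lt_of_le (hr a ha) with h | h
          · exact absurd (hac a ha h.symm) (ne_of_gt hpa)
          · exact h
        have ht : 0 < (p a / r a) / (Ps / Qs) := div_pos (div_pos hpa hra) (div_pos hPpos hQpos)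
        have h1 : 1 - ((p a / r a) / (Ps / Qs))⁻¹ ≤ Real.log ((p a / r a) / (Ps / Qs)) :=
          one_sub_inv_le_log ht
        have h2 : Real.log ((p a / r a) / (Ps / Qs)) =
            Real.log (p a / r a) - Real.log (Ps / Qs) :=
          Real.log_div (div_pos hpa hra).ne' (div_pos hPpos hQpos).ne'
        have h3 : p a * (1 - ((p a / r a) / (Ps / Qs))⁻¹) ≤
            p a * Real.log ((p a / r a) / (Ps / Qs)) :=
          mul_le_mul_of_nonneg_left h1 (le_of_lt hpa)
        have h4 : p a * (1 - ((p a / r a) / (Ps / Qs))⁻¹) = p a - r a * (Ps / Qs) := by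
          field_simp
        rw [h4, h2, mul_sub] at h3
        exact h3
    have hsum := Finset.sum_le_sum key
    rw [Finset.sum_sub_distrib, Finset.sum_sub_distrib, ← Finset.sum_mul, ← Finset.sum_mul] at hsum
    have : Ps - Qs * (Ps / Qs) = 0 := by field_simp; ring
    rw [← hPs, ← hQs] at hsum
    rw [this] at hsum
    linarith

lemma dpi {α β : Type*} (s : Finset α) (t : Finset β) (f : α → β)
    (hf : ∀ a ∈ s, f a ∈ t) (p r : α → ℝ)
    (hp : ∀ a ∈ s, 0 ≤ p a) (hr : ∀ a ∈ s, 0 ≤ r a)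
    (hac : ∀ a ∈ s, r a = 0 → p a = 0) :
    ∑ b ∈ t, (∑ a ∈ s.filter (fun a => f a = b), p a) *
        Real.log ((∑ a ∈ s.filter (fun a => f a = b), p a) /
          (∑ a ∈ s.filter (fun a => f a = b), r a)) ≤
      ∑ a ∈ s, p a * Real.log (p a / r a) := by
  rw [← Finset.sum_fiberwise_of_maps_to hf (fun a => p a * Real.log (p a / r a))]
  apply Finset.sum_le_sum
  intro b _
  exact logSum _ _ _ (fun a ha => hp a (Finset.mem_filter.mp ha).1)
    (fun a ha => hr a (Finset.mem_filter.mp ha).1)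
    (fun a ha => hac a (Finset.mem_filter.mp ha).1)

/-- The state distribution after `k` steps under `μ`. -/
noncomputable def stD (A : ℕ → List Bool → 𝒳 → List Bool) (k : ℕ)
    (μ : (Fin q → 𝒳) → ℝ) : List Bool → ℝ :=
  fun σ => ∑ x : Fin q → 𝒳, if streamRun A x k = σ then μ x else 0

lemma margS_eq_stD (A : ℕ → List Bool → 𝒳 → List Bool) (P : (Fin q → 𝒳) → ℝ)
    (i : Fin q) : margS A P i = stD A i.1 P := rfl

lemma stD_eq_zero {A : ℕ → List Bool → 𝒳 → List Bool} {k : ℕ} {σ : List Bool}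
    (h : σ ∉ stSupp A q k) (μ : (Fin q → 𝒳) → ℝ) : stD A k μ σ = 0 := by
  apply Finset.sum_eq_zero
  intro x _
  rw [if_neg]
  intro hx
  exact h (hx ▸ streamRun_mem A x k)

lemma stD_nonneg {A : ℕ → List Bool → 𝒳 → List Bool} {μ : (Fin q → 𝒳) → ℝ}
    (hμ : ∀ x, 0 ≤ μ x) (k : ℕ) (σ : List Bool) : 0 ≤ stD A k μ σ :=
  Finset.sum_nonneg fun x _ => by by_cases h : streamRun A x k = σ <;> simp [h, hμ x]

lemma stD_ac {A : ℕ → List Bool → 𝒳 → List Bool} {P Q : (Fin q → 𝒳) → ℝ}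
    (hQnn : ∀ x, 0 ≤ Q x) (hac : ∀ x, Q x = 0 → P x = 0) (k : ℕ) (σ : List Bool)
    (h : stD A k Q σ = 0) : stD A k P σ = 0 := by
  apply Finset.sum_eq_zero
  intro x _
  by_cases hx : streamRun A x k = σ
  · rw [if_pos hx]
    apply hac
    have := (Finset.sum_eq_zero_iff_of_nonneg
      (fun y _ => by by_cases hy : streamRun A y k = σ <;> simp [hy, hQnn y])).mp h x
        (Finset.mem_univ x)
    rwa [if_pos hx] at this
  · rw [if_neg hx]

lemma klDiv_stD (A : ℕ → List Bool → 𝒳 → List Bool) (P Q : (Fin q → 𝒳) → ℝ) (k : ℕ) :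
    klDiv (stD A k P) (stD A k Q) = ∑ σ ∈ stSupp A q k,
      stD A k P σ * Real.log (stD A k P σ / stD A k Q σ) := by
  unfold klDiv
  apply tsum_eq_sum
  intro σ hσ
  rw [stD_eq_zero hσ, zero_mul]

lemma miXS_eq (A : ℕ → List Bool → 𝒳 → List Bool) (P : (Fin q → 𝒳) → ℝ) (i : Fin q) :
    miXS A P i = ∑ σ ∈ stSupp A q i.1, ∑ a : 𝒳, jointXS A P i a σ *
      Real.log (jointXS A P i a σ / (margX P i a * margS A P i σ)) := by
  unfold miXS
  apply tsum_eq_sum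
  intro σ hσ
  exact Finset.sum_eq_zero fun a _ => by rw [jointXS_eq_zero hσ, zero_mul]

lemma prod_update (Q : (Fin q → 𝒳) → ℝ)
    (hprod : ∀ x : Fin q → 𝒳, Q x = ∏ i : Fin q, margX Q i (x i))
    (i : Fin q) (x : Fin q → 𝒳) (b : 𝒳) :
    Q (Function.update x i b) * margX Q i (x i) = Q x * margX Q i b := by
  have key : ∀ c : 𝒳, Q (Function.update x i c) =
      margX Q i c * ∏ j ∈ Finset.univ.erase i, margX Q j (x j) := by
    intro c
    rw [hprod, ← Finset.mul_prod_erase Finset.univ _ (Finset.mem_univ i),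
      Function.update_self]
    congr 1
    refine Finset.prod_congr rfl fun j hj => ?_
    rw [Function.update_of_ne (Finset.mem_erase.mp hj).1]
  have hx : Q x = margX Q i (x i) * ∏ j ∈ Finset.univ.erase i, margX Q j (x j) := by
    conv_lhs => rw [← Function.update_eq_self i x]
    exact key (x i)
  rw [key b, hx]
  ring

lemma streamRun_update (A : ℕ → List Bool → 𝒳 → List Bool) (i : Fin q)
    (x : Fin q → 𝒳) (b : 𝒳) :
    streamRun A (Function.update x i b) i.1 = streamRun A x i.1 :=
  streamRun_eq_of A i.1 _ _ (fun j hj =>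
    Function.update_of_ne (by rintro rfl; exact absurd hj (lt_irrefl _)) _ _)

lemma jointXS_indep (A : ℕ → List Bool → 𝒳 → List Bool) (Q : (Fin q → 𝒳) → ℝ)
    (hQsum : ∑ x, Q x = 1)
    (hprod : ∀ x : Fin q → 𝒳, Q x = ∏ i : Fin q, margX Q i (x i))
    (i : Fin q) (a : 𝒳) (σ : List Bool) :
    jointXS A Q i a σ = margX Q i a * margS A Q i σ := by
  have h1 : (∑ b : 𝒳, margX Q i b) = 1 := by rw [sum_margX]; exact hQsum
  have lhs : jointXS A Q i a σ = ∑ x : Fin q → 𝒳, ∑ b : 𝒳,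
      (if x i = a ∧ streamRun A x i.1 = σ then Q x * margX Q i b else 0) := by
    unfold jointXS
    refine Finset.sum_congr rfl fun x _ => ?_
    by_cases hc : x i = a ∧ streamRun A x i.1 = σ
    · simp only [if_pos hc, ← Finset.mul_sum, h1, mul_one]
    · simp [hc]
  have rhs : margX Q i a * margS A Q i σ = ∑ x : Fin q → 𝒳, ∑ b : 𝒳,
      (if b = a ∧ streamRun A x i.1 = σ then Q x * margX Q i b else 0) := by
    unfold margS
    rw [Finset.mul_sum]
    refine Finset.sum_congr rfl fun x _ => ?_
    by_cases hc : streamRun A x i.1 = σ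
    · simp only [hc, and_true, if_pos]
      rw [Finset.sum_ite_eq' Finset.univ a (fun b => Q x * margX Q i b)]
      simp [mul_comm]
    · simp [hc]
  rw [lhs, rhs, ← Finset.sum_product' (f := fun x b =>
      if x i = a ∧ streamRun A x i.1 = σ then Q x * margX Q i b else 0),
    ← Finset.sum_product' (f := fun x b =>
      if b = a ∧ streamRun A x i.1 = σ then Q x * margX Q i b else 0),
    Finset.univ_product_univ]
  have hinv : Function.Involutive
      (fun p : (Fin q → 𝒳) × 𝒳 => (Function.update p.1 i p.2, p.1 i)) := by
    rintro ⟨x, b⟩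
    simp [Function.update_idem, Function.update_eq_self, Function.update_self]
  refine Fintype.sum_equiv hinv.toPerm _ _ ?_
  rintro ⟨x, b⟩
  simp only [Function.Involutive.coe_toPerm]
  simp only [streamRun_update A i x b, prod_update Q hprod i x b]

lemma stD_succ (A : ℕ → List Bool → 𝒳 → List Bool) (μ : (Fin q → 𝒳) → ℝ)
    (i : Fin q) (σ' : List Bool)
    {dec : DecidablePred (fun p : List Bool × 𝒳 => A (i.1+1) p.1 p.2 = σ')} :
    stD A (i.1+1) μ σ' =
      ∑ p ∈ @Finset.filter _ (fun p => A (i.1+1) p.1 p.2 = σ') dec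
          (stSupp A q i.1 ×ˢ (Finset.univ : Finset 𝒳)),
        jointXS A μ i p.2 p.1 := by
  rw [Finset.filter_congr_decidable]
  unfold stD jointXS
  rw [Finset.sum_comm]
  refine Finset.sum_congr rfl fun x _ => ?_
  have hmem : (streamRun A x i.1, x i) ∈ stSupp A q i.1 ×ˢ (Finset.univ : Finset 𝒳) :=
    Finset.mem_product.mpr ⟨streamRun_mem A x i.1, Finset.mem_univ _⟩
  have hrw : ∀ p : List Bool × 𝒳, (x i = p.2 ∧ streamRun A x i.1 = p.1) ↔
      p = (streamRun A x i.1, x i) := by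
    intro p
    constructor
    · rintro ⟨h1, h2⟩
      exact Prod.ext h2.symm h1.symm
    · rintro rfl
      exact ⟨rfl, rfl⟩
  symm
  calc (∑ p ∈ (stSupp A q i.1 ×ˢ (Finset.univ : Finset 𝒳)).filter
          (fun p => A (i.1+1) p.1 p.2 = σ'),
        if x i = p.2 ∧ streamRun A x i.1 = p.1 then μ x else 0)
      = ∑ p ∈ (stSupp A q i.1 ×ˢ (Finset.univ : Finset 𝒳)).filter
          (fun p => A (i.1+1) p.1 p.2 = σ'),
        if p = (streamRun A x i.1, x i) then μ x else 0 :=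
        Finset.sum_congr rfl fun p _ => if_congr (hrw p) rfl rfl
    _ = if (streamRun A x i.1, x i) ∈ (stSupp A q i.1 ×ˢ (Finset.univ : Finset 𝒳)).filter
          (fun p => A (i.1+1) p.1 p.2 = σ') then μ x else 0 :=
        Finset.sum_ite_eq' _ _ _
    _ = if streamRun A x (i.1+1) = σ' then μ x else 0 := by
        have hs : streamRun A x (i.1+1) = A (i.1+1) (streamRun A x i.1) (x i) := by
          simp only [streamRun, dif_pos i.isLt, Fin.eta]
        rw [hs]
        refine if_congr ?_ rfl rfl
        simp [Finset.mem_filter, hmem]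

lemma mapsTo_step (A : ℕ → List Bool → 𝒳 → List Bool) (i : Fin q) :
    ∀ p ∈ stSupp A q i.1 ×ˢ (Finset.univ : Finset 𝒳),
      A (i.1+1) p.1 p.2 ∈ stSupp A q (i.1+1) := by
  rintro ⟨u, v⟩ hp
  obtain ⟨x, -, hx⟩ := Finset.mem_image.mp (Finset.mem_product.mp hp).1
  have h1 : streamRun A (Function.update x i v) i.1 = u := by
    rw [streamRun_update A i x v, hx]
  have h2 : streamRun A (Function.update x i v) (i.1+1) = A (i.1+1) u v := by
    simp only [streamRun, dif_pos i.isLt, Fin.eta]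
    rw [h1, Function.update_self]
  exact h2 ▸ streamRun_mem A (Function.update x i v) (i.1+1)

lemma condDiv_eq_miXS (A : ℕ → List Bool → 𝒳 → List Bool) (P : (Fin q → 𝒳) → ℝ)
    (hPnn : ∀ x, 0 ≤ P x) (i : Fin q) : condDiv A P i = miXS A P i := by
  unfold condDiv miXS
  refine tsum_congr fun σ => ?_
  by_cases h : margS A P i σ = 0
  · have hj : ∀ a : 𝒳, jointXS A P i a σ = 0 := fun a =>
      le_antisymm (by rw [← h]; exact jointXS_le_margS hPnn i a σ)
        (jointXS_nonneg hPnn i a σ)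
    simp [h, hj]
  · rw [Finset.mul_sum]
    refine Finset.sum_congr rfl fun a _ => ?_
    rw [← mul_assoc, mul_comm (margS A P i σ) (jointXS A P i a σ / margS A P i σ),
      div_mul_cancel₀ _ h, div_div, mul_comm (margS A P i σ) (margX P i a)]

lemma step_ineq (A : ℕ → List Bool → 𝒳 → List Bool) (P Q : (Fin q → 𝒳) → ℝ)
    (hPnn : ∀ x, 0 ≤ P x) (hQnn : ∀ x, 0 ≤ Q x) (hQsum : ∑ x, Q x = 1)
    (hmarg : ∀ (i : Fin q) (a : 𝒳), margX P i a = margX Q i a)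
    (hprod : ∀ x : Fin q → 𝒳, Q x = ∏ i : Fin q, margX Q i (x i))
    (hac : ∀ x, Q x = 0 → P x = 0) (i : Fin q) :
    klDiv (stD A (i.1+1) P) (stD A (i.1+1) Q) ≤
      klDiv (stD A i.1 P) (stD A i.1 Q) + miXS A P i := by
  have h1 : klDiv (stD A (i.1+1) P) (stD A (i.1+1) Q) ≤
      ∑ p ∈ stSupp A q i.1 ×ˢ (Finset.univ : Finset 𝒳),
        jointXS A P i p.2 p.1 *
          Real.log (jointXS A P i p.2 p.1 / jointXS A Q i p.2 p.1) := by
    rw [klDiv_stD]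
    have hgoal := dpi (stSupp A q i.1 ×ˢ (Finset.univ : Finset 𝒳))
      (stSupp A q (i.1+1)) (fun p => A (i.1+1) p.1 p.2) (mapsTo_step A i)
      (fun p => jointXS A P i p.2 p.1) (fun p => jointXS A Q i p.2 p.1)
      (fun p _ => jointXS_nonneg hPnn i p.2 p.1)
      (fun p _ => jointXS_nonneg hQnn i p.2 p.1)
      (fun p _ h => jointXS_ac hQnn hac i p.2 p.1 h)
    refine le_trans (le_of_eq ?_) hgoal
    refine Finset.sum_congr rfl fun σ' _ => ?_
    rw [← stD_succ A P i σ', ← stD_succ A Q i σ']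
  have h2 : ∀ p : List Bool × 𝒳, jointXS A Q i p.2 p.1 =
      margX P i p.2 * stD A i.1 Q p.1 := by
    intro p
    rw [jointXS_indep A Q hQsum hprod i p.2 p.1, hmarg, margS_eq_stD]
  have h3 : ∀ p ∈ stSupp A q i.1 ×ˢ (Finset.univ : Finset 𝒳),
      jointXS A P i p.2 p.1 * Real.log (jointXS A P i p.2 p.1 / jointXS A Q i p.2 p.1) =
      jointXS A P i p.2 p.1 *
          Real.log (jointXS A P i p.2 p.1 / (margX P i p.2 * stD A i.1 P p.1)) +
        jointXS A P i p.2 p.1 * Real.log (stD A i.1 P p.1 / stD A i.1 Q p.1) := by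
    intro p _
    rcases eq_or_lt_of_le (jointXS_nonneg hPnn i p.2 p.1) with hz | hJ
    · rw [← hz]
      simp
    · have hmX : 0 < margX P i p.2 := lt_of_lt_of_le hJ (jointXS_le_margX hPnn i p.2 p.1)
      have hsP : 0 < stD A i.1 P p.1 := by
        have := jointXS_le_margS (A := A) hPnn i p.2 p.1
        rw [margS_eq_stD] at this
        exact lt_of_lt_of_le hJ this
      have hsQ : 0 < stD A i.1 Q p.1 := by
        rcases eq_or_lt_of_le (stD_nonneg hQnn i.1 p.1) with h | h
        · exfalso
          have := stD_ac hQnn hac i.1 p.1 h.symm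
          rw [this] at hsP
          exact lt_irrefl _ hsP
        · exact h
      rw [h2 p]
      rw [Real.log_div hJ.ne' (mul_pos hmX hsQ).ne',
        Real.log_div hJ.ne' (mul_pos hmX hsP).ne',
        Real.log_div hsP.ne' hsQ.ne', Real.log_mul hmX.ne' hsQ.ne',
        Real.log_mul hmX.ne' hsP.ne']
      ring
  have h4 : ∑ p ∈ stSupp A q i.1 ×ˢ (Finset.univ : Finset 𝒳),
        jointXS A P i p.2 p.1 *
          Real.log (jointXS A P i p.2 p.1 / jointXS A Q i p.2 p.1) =
      (∑ p ∈ stSupp A q i.1 ×ˢ (Finset.univ : Finset 𝒳),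
        jointXS A P i p.2 p.1 *
          Real.log (jointXS A P i p.2 p.1 / (margX P i p.2 * stD A i.1 P p.1))) +
      ∑ p ∈ stSupp A q i.1 ×ˢ (Finset.univ : Finset 𝒳),
        jointXS A P i p.2 p.1 * Real.log (stD A i.1 P p.1 / stD A i.1 Q p.1) := by
    rw [← Finset.sum_add_distrib]
    exact Finset.sum_congr rfl h3
  have h5 : ∑ p ∈ stSupp A q i.1 ×ˢ (Finset.univ : Finset 𝒳),
      jointXS A P i p.2 p.1 *
        Real.log (jointXS A P i p.2 p.1 / (margX P i p.2 * stD A i.1 P p.1)) =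
      miXS A P i := by
    rw [miXS_eq, Finset.sum_product]
    refine Finset.sum_congr rfl fun σ _ => Finset.sum_congr rfl fun a _ => ?_
    rw [margS_eq_stD]
  have h6 : ∑ p ∈ stSupp A q i.1 ×ˢ (Finset.univ : Finset 𝒳),
      jointXS A P i p.2 p.1 * Real.log (stD A i.1 P p.1 / stD A i.1 Q p.1) =
      klDiv (stD A i.1 P) (stD A i.1 Q) := by
    rw [klDiv_stD, Finset.sum_product]
    refine Finset.sum_congr rfl fun σ _ => ?_
    dsimp only
    rw [← Finset.sum_mul]
    congr 1
    rw [← margS_eq_stD A P i]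
    exact sum_jointXS P i σ
  calc klDiv (stD A (i.1+1) P) (stD A (i.1+1) Q)
      ≤ ∑ p ∈ stSupp A q i.1 ×ˢ (Finset.univ : Finset 𝒳),
          jointXS A P i p.2 p.1 *
            Real.log (jointXS A P i p.2 p.1 / jointXS A Q i p.2 p.1) := h1
    _ = miXS A P i + klDiv (stD A i.1 P) (stD A i.1 Q) := by rw [h4, h5, h6]
    _ = klDiv (stD A i.1 P) (stD A i.1 Q) + miXS A P i := add_comm _ _

lemma main_ind (A : ℕ → List Bool → 𝒳 → List Bool) (P Q : (Fin q → 𝒳) → ℝ)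
    (hPnn : ∀ x, 0 ≤ P x) (hPsum : ∑ x, P x = 1)
    (hQnn : ∀ x, 0 ≤ Q x) (hQsum : ∑ x, Q x = 1)
    (hmarg : ∀ (i : Fin q) (a : 𝒳), margX P i a = margX Q i a)
    (hprod : ∀ x : Fin q → 𝒳, Q x = ∏ i : Fin q, margX Q i (x i))
    (hac : ∀ x, Q x = 0 → P x = 0) :
    ∀ k, k ≤ q → klDiv (stD A k P) (stD A k Q) ≤
      ∑ i ∈ Finset.univ.filter (fun i : Fin q => i.1 < k), miXS A P i := by
  intro k
  induction k with
  | zero =>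
    intro _
    have hPQ : stD A 0 P = stD A 0 Q := by
      funext σ
      simp only [stD, streamRun]
      by_cases h : ([] : List Bool) = σ
      · simp [h, hPsum, hQsum]
      · simp [h]
    rw [hPQ, klDiv_self]
    have he : Finset.univ.filter (fun i : Fin q => i.1 < 0) = ∅ := by
      apply Finset.filter_false_of_mem
      intro i _
      omega
    rw [he, Finset.sum_empty]
  | succ n ih =>
    intro hn1
    have hn : n < q := Nat.lt_of_succ_le hn1
    have hstep : klDiv (stD A (n+1) P) (stD A (n+1) Q) ≤
        klDiv (stD A n P) (stD A n Q) + miXS A P ⟨n, hn⟩ :=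
      step_ineq A P Q hPnn hQnn hQsum hmarg hprod hac ⟨n, hn⟩
    have hfilter : Finset.univ.filter (fun i : Fin q => i.1 < n + 1) =
        insert (⟨n, hn⟩ : Fin q) (Finset.univ.filter (fun i : Fin q => i.1 < n)) := by
      ext j
      simp only [Finset.mem_filter, Finset.mem_univ, true_and, Finset.mem_insert,
        Fin.ext_iff]
      omega
    have hnotmem : (⟨n, hn⟩ : Fin q) ∉ Finset.univ.filter (fun i : Fin q => i.1 < n) := by
      simp
    calc klDiv (stD A (n+1) P) (stD A (n+1) Q)
        ≤ klDiv (stD A n P) (stD A n Q) + miXS A P ⟨n, hn⟩ := hstep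
      _ ≤ (∑ i ∈ Finset.univ.filter (fun i : Fin q => i.1 < n), miXS A P i) +
            miXS A P ⟨n, hn⟩ := add_le_add_left (ih hn.le) _
      _ = ∑ i ∈ Finset.univ.filter (fun i : Fin q => i.1 < n + 1), miXS A P i := by
          rw [hfilter, Finset.sum_insert hnotmem, add_comm]

end Aux

/-- Let `P` and `Q` be probability distributions on `𝒳^q` with equal coordinate
marginals, where `Q` is a product distribution and `P ≪ Q`.  Then for any
streaming algorithm `A`:
`D_KL(P_A ‖ Q_A) ≤ Σ_{i=1}^q D_KL(P_{X_i|Σ_{i-1}} ‖ P_{X_i} | P_{Σ_{i-1}})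
 = Σ_{i=1}^q I(X_i; Σ_{i-1})`. -/
theorem stmt_3 {𝒳 : Type*} [Fintype 𝒳] {q : ℕ}
    (P Q : (Fin q → 𝒳) → ℝ)
    (hPnn : ∀ x, 0 ≤ P x) (hPsum : ∑ x, P x = 1)
    (hQnn : ∀ x, 0 ≤ Q x) (hQsum : ∑ x, Q x = 1)
    (hmarg : ∀ (i : Fin q) (a : 𝒳), margX P i a = margX Q i a)
    (hprod : ∀ x : Fin q → 𝒳, Q x = ∏ i : Fin q, margX Q i (x i))
    (hac : ∀ x, Q x = 0 → P x = 0)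
    (A : ℕ → List Bool → 𝒳 → List Bool) :
    klDiv (outDist A P) (outDist A Q) ≤ ∑ i : Fin q, condDiv A P i ∧
      ∑ i : Fin q, condDiv A P i = ∑ i : Fin q, miXS A P i := by
  constructor
  · have h := main_ind A P Q hPnn hPsum hQnn hQsum hmarg hprod hac q le_rfl
    have hfil : Finset.univ.filter (fun i : Fin q => i.1 < q) = Finset.univ :=
      Finset.filter_true_of_mem (fun i _ => i.isLt)
    rw [hfil] at h
    calc klDiv (outDist A P) (outDist A Q)
        = klDiv (stD A q P) (stD A q Q) := rfl
      _ ≤ ∑ i : Fin q, miXS A P i := h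
      _ = ∑ i : Fin q, condDiv A P i :=
          (Finset.sum_congr rfl fun i _ => condDiv_eq_miXS A P hPnn i).symm
  · exact Finset.sum_congr rfl fun i _ => condDiv_eq_miXS A P hPnn i
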